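/- If E(R) is projective as a right R-module, then E(R) is co-Kasch if and only if R is right self-injective. -/

import Mathlib

def IsCoKasch (R : Type*) [Ring R] (M : Type*) [AddCommGroup M] [Module R M] : Prop :=
  ∀ (K : Submodule R M) (S : Submodule R (M ⧸ K)), IsSimpleModule R S →
    ∃ f : M →ₗ[R] S, Function.Surjective f

/-- `E` with embedding `i` is an injective hull: `E` is injective and `i` is an
essential monomorphism. -/
def IsInjectiveHull (R : Type*) [Ring R] {S E : Type*} [AddCommGroup S] [Module R S]
    [AddCommGroup E] [Module R E] (i : S →ₗ[R] E) : Prop :=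
  Module.Injective R E ∧ Function.Injective i ∧
    ∀ N : Submodule R E, N ≠ ⊥ → N ⊓ LinearMap.range i ≠ ⊥

/-- If `E(R)` is projective, then `E(R)` is co-Kasch iff `R` is
self-injective. -/
theorem stmt17 (R : Type u) [Ring R] (E : Type u) [AddCommGroup E] [Module R E]
    (i : R →ₗ[R] E) (hE : IsInjectiveHull R i) (hproj : Module.Projective R E) :
    IsCoKasch R E ↔ Module.Injective R R := by
  obtain ⟨hEinj, hi, _hess⟩ := hE
  constructor
  · intro hCK
    set T : Submodule R R := ⨆ φ : E →ₗ[R] R, LinearMap.range φ with hT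
    by_cases hTtop : T = ⊤
    · -- `1 ∈ T`; use induction on membership in the supremum.
      have h1 : (1 : R) ∈ T := hTtop ▸ Submodule.mem_top
      -- the motive: "a admits extensions up to right multiplication by a"
      have key : ∀ ⦃X Y : Type u⦄ [AddCommGroup X] [AddCommGroup Y] [Module R X] [Module R Y]
          (ι : X →ₗ[R] Y), Function.Injective ι → ∀ φ : X →ₗ[R] R,
          ∃ Φ : Y →ₗ[R] R, ∀ x, Φ (ι x) = φ x * 1 := by
        refine Submodule.iSup_induction (motive := fun a : R =>
          ∀ ⦃X Y : Type u⦄ [AddCommGroup X] [AddCommGroup Y] [Module R X] [Module R Y]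
            (ι : X →ₗ[R] Y), Function.Injective ι → ∀ φ : X →ₗ[R] R,
            ∃ Φ : Y →ₗ[R] R, ∀ x, Φ (ι x) = φ x * a)
          (fun φ : E →ₗ[R] R => LinearMap.range φ) h1 ?_ ?_ ?_
        · rintro ψ a ⟨e, rfl⟩ X Y _ _ _ _ ι hι φ
          obtain ⟨M, hM⟩ := hEinj.out ι hι (φ.smulRight e)
          refine ⟨ψ.comp M, fun x => ?_⟩
          have : M (ι x) = φ x • e := hM x
          simp [this, smul_eq_mul]
        · intro X Y _ _ _ _ ι hι φ
          exact ⟨0, fun x => by simp⟩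
        · rintro a b ha hb X Y _ _ _ _ ι hι φ
          obtain ⟨Φa, hΦa⟩ := ha ι hι φ
          obtain ⟨Φb, hΦb⟩ := hb ι hι φ
          exact ⟨Φa + Φb, fun x => by simp [hΦa x, hΦb x, mul_add]⟩
      constructor
      intro X Y _ _ _ _ f hf g
      obtain ⟨Φ, hΦ⟩ := key f hf g
      exact ⟨Φ, fun x => by simpa using hΦ x⟩
    · -- take a maximal left ideal containing the trace; derive a contradiction
      exfalso
      obtain ⟨I, hImax, hTI⟩ := Ideal.exists_le_maximal (α := R) T hTtop
      set K : Submodule R E := Submodule.map i I with hK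
      set S' : Submodule R (E ⧸ K) := (LinearMap.range i).map K.mkQ with hS'
      have hsub : ∀ r : R, K.mkQ (i r) ∈ S' := fun r =>
        Submodule.mem_map_of_mem (f := K.mkQ) ⟨r, rfl⟩
      let q : R →ₗ[R] S' := (K.mkQ.comp i).codRestrict S' hsub
      have hqsurj : Function.Surjective q := by
        rintro ⟨x, hx⟩
        obtain ⟨y, ⟨r, rfl⟩, rfl⟩ := hx
        exact ⟨r, rfl⟩
      have hqzero : ∀ r ∈ I, q r = 0 := by
        intro r hr
        apply Subtype.ext
        show K.mkQ (i r) = 0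
        rw [Submodule.mkQ_apply, Submodule.Quotient.mk_eq_zero, hK]
        exact Submodule.mem_map_of_mem (f := i) hr
      have hker : LinearMap.ker q = I := by
        ext r
        constructor
        · intro h
          have h' : K.mkQ (i r) = 0 := Subtype.ext_iff.mp h
          rw [Submodule.mkQ_apply, Submodule.Quotient.mk_eq_zero, hK] at h'
          obtain ⟨s, hs, hsi⟩ := Submodule.mem_map.mp h'
          rwa [← hi hsi]
        · intro h
          exact hqzero r h
      have hsimple : IsSimpleModule R S' := by
        have h1 : IsSimpleModule R (R ⧸ I) := isSimpleModule_iff_isCoatom.mpr hImax.out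
        have h2 : IsSimpleModule R (R ⧸ LinearMap.ker q) := by rwa [hker]
        exact IsSimpleModule.congr (q.quotKerEquivOfSurjective hqsurj).symm
      obtain ⟨f, hfsurj⟩ := hCK K S' hsimple
      obtain ⟨g, hg⟩ := Module.projective_lifting_property q f hqsurj
      have hgI : ∀ x : E, g x ∈ I := fun x =>
        hTI (Submodule.mem_iSup_of_mem g ⟨x, rfl⟩)
      have hf0 : ∀ x : E, f x = 0 := by
        intro x
        have : f x = q (g x) := by rw [← hg]; rfl
        rw [this]
        exact hqzero (g x) (hgI x)
      -- but `S'` is nontrivial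
      have hs0 : (⟨K.mkQ (i 1), hsub 1⟩ : S') ≠ 0 := by
        intro h
        have h' : K.mkQ (i 1) = 0 := Subtype.ext_iff.mp h
        rw [Submodule.mkQ_apply, Submodule.Quotient.mk_eq_zero, hK] at h'
        obtain ⟨s, hs, hsi⟩ := Submodule.mem_map.mp h'
        exact hImax.ne_top (I.eq_top_iff_one.mpr (by rwa [← hi hsi]))
      obtain ⟨x, hx⟩ := hfsurj ⟨K.mkQ (i 1), hsub 1⟩
      exact hs0 (by rw [← hx, hf0 x])
  · intro hR
    obtain ⟨h, hh⟩ := hR.out i hi LinearMap.id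
    intro K S hS
    haveI := hS
    have hnt : Nontrivial S := IsSimpleModule.nontrivial R S
    obtain ⟨s, hs⟩ := exists_ne (0 : S)
    refine ⟨(LinearMap.toSpanSingleton R S s).comp h, fun t => ?_⟩
    obtain ⟨r, hr⟩ := IsSimpleModule.toSpanSingleton_surjective R hs t
    refine ⟨i r, ?_⟩
    simp only [LinearMap.comp_apply, hh r, LinearMap.id_apply]
    exact hr
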